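/- Let M, N ≥ 1 and σ > 0. Set a = (σ²/(σ²+1))^{M/2} and b = (2σ²/(2σ²+1))^{M/2}, and let K̃ be the (N+1)×(N+1) matrix indexed by {0,…,N} with K̃_{n,n} = 1 for all n, K̃_{n,n'} = a for 1 ≤ n ≠ n' ≤ N, and K̃_{0,n} = K̃_{n,0} = b for 1 ≤ n ≤ N. Let λ* ∈ ℝ^{N+1} be a probability vector. Suppose K̃ is invertible and λ̃ maximizes the Jensen-bound objective f (with K = K̃) over S with all entries of λ̃ strictly positive. Then there exist c₁ ≥ 0 and c₂ ∈ ℝ such that λ̃_n = c₁ λ*_n + c₂ for all 1 ≤ n ≤ N. -/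

import Mathlib

open scoped BigOperators

set_option maxHeartbeats 2000000 in
/-- with infinitely many random sensor groups, the Jensen-bound
maximizer is an affine function of the true rates on the nonzero indices. -/
theorem stmt_4 (M N : ℕ) (hM : 1 ≤ M) (hN : 1 ≤ N) (σ : ℝ) (hσ : 0 < σ)
    (a b : ℝ)
    (ha : a = (σ ^ 2 / (σ ^ 2 + 1)) ^ ((M : ℝ) / 2))
    (hb : b = (2 * σ ^ 2 / (2 * σ ^ 2 + 1)) ^ ((M : ℝ) / 2))
    (Kt : Matrix (Fin (N + 1)) (Fin (N + 1)) ℝ)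
    (hKt : ∀ n n' : Fin (N + 1),
      Kt n n' = if n = n' then 1 else if n = 0 ∨ n' = 0 then b else a)
    (lamStar : Fin (N + 1) → ℝ)
    (hlamStar_nonneg : ∀ n, 0 ≤ lamStar n) (hlamStar_sum : ∑ n, lamStar n = 1)
    (hKinv : IsUnit Kt.det)
    (lamT : Fin (N + 1) → ℝ)
    (hlamT_mem : (∀ n, 0 ≤ lamT n) ∧ ∑ n, lamT n ≤ 1)
    (hmax : ∀ lam : Fin (N + 1) → ℝ, (∀ n, 0 ≤ lam n) → ∑ n, lam n ≤ 1 →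
      ∑ n, lamStar n * Real.log (Kt.mulVec lam n)
        ≤ ∑ n, lamStar n * Real.log (Kt.mulVec lamT n))
    (hposT : ∀ n, 0 < lamT n) :
    ∃ c₁ c₂ : ℝ, 0 ≤ c₁ ∧ ∀ n : Fin (N + 1), n ≠ 0 →
      lamT n = c₁ * lamStar n + c₂ := by
  obtain ⟨hT_nonneg, hT_sum⟩ := hlamT_mem
  have hMpos : (0:ℝ) < (M : ℝ) / 2 := by
    have : (1:ℝ) ≤ (M : ℝ) := by exact_mod_cast hM
    linarith
  have hσ2 : (0:ℝ) < σ ^ 2 := by positivity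
  have ha0 : 0 < a := by
    rw [ha]; exact Real.rpow_pos_of_pos (by positivity) _
  have ha1 : a < 1 := by
    rw [ha]
    refine Real.rpow_lt_one (by positivity) ?_ hMpos
    rw [div_lt_one (by positivity)]; linarith
  have hb0 : 0 < b := by
    rw [hb]; exact Real.rpow_pos_of_pos (by positivity) _
  have hb1 : b < 1 := by
    rw [hb]
    refine Real.rpow_lt_one (by positivity) ?_ hMpos
    rw [div_lt_one (by positivity)]; linarith
  obtain ⟨u, hu⟩ : ∃ u : Fin (N + 1) → ℝ, u = Kt.mulVec lamT := ⟨_, rfl⟩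
  simp only [← hu] at hmax
  have humv : ∀ n, u n = ∑ m, Kt n m * lamT m := fun n => by rw [hu]; rfl
  have hKpos : ∀ n m : Fin (N + 1), 0 < Kt n m := by
    intro n m
    rw [hKt]
    split_ifs with h1 h2
    · norm_num
    · exact hb0
    · exact ha0
  have hu_pos : ∀ n, 0 < u n := by
    intro n
    rw [humv]
    exact Finset.sum_pos (fun m _ => mul_pos (hKpos n m) (hposT m)) Finset.univ_nonempty
  obtain ⟨S, hS⟩ : ∃ S : ℝ, S = ∑ n, lamT n := ⟨_, rfl⟩
  have hSle : S ≤ 1 := by rw [hS]; exact hT_sum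
  -- formula for u on nonzero indices
  have hu_formula : ∀ i : Fin (N + 1), i ≠ 0 →
      u i = (1 - a) * lamT i + (b - a) * lamT 0 + a * S := by
    intro i hi
    have key : ∀ m, Kt i m * lamT m =
        (1 - a) * (if i = m then lamT m else 0)
          + (b - a) * (if m = 0 then lamT m else 0) + a * lamT m := by
      intro m
      rw [hKt]
      split_ifs <;> first | ring1 | (exfalso; subst_vars; simp_all)
    rw [humv, Finset.sum_congr rfl fun m _ => key m]
    rw [Finset.sum_add_distrib, Finset.sum_add_distrib, ← Finset.mul_sum, ← Finset.mul_sum,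
      ← Finset.mul_sum]
    simp [Finset.sum_ite_eq, Finset.sum_ite_eq', ← hS]
  have hu0_formula : u 0 = (1 - b) * lamT 0 + b * S := by
    have key : ∀ m, Kt 0 m * lamT m =
        (1 - b) * (if (0 : Fin (N+1)) = m then lamT m else 0) + b * lamT m := by
      intro m
      rw [hKt]
      split_ifs <;> first | ring1 | (exfalso; subst_vars; simp_all)
    rw [humv, Finset.sum_congr rfl fun m _ => key m]
    rw [Finset.sum_add_distrib, ← Finset.mul_sum, ← Finset.mul_sum]
    simp [Finset.sum_ite_eq, ← hS]
  have hδ : (0:ℝ) < 1 - a := by linarith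
  -- the key ratio identity from first-order optimality
  have hratio : ∀ i j : Fin (N + 1), i ≠ 0 → j ≠ 0 →
      lamStar i * u j = lamStar j * u i := by
    intro i j hi hj
    by_cases hij : i = j
    · subst hij; ring
    have hji : j ≠ i := fun h => hij h.symm
    obtain ⟨w, hwdef⟩ : ∃ w : Fin (N + 1) → ℝ,
        w = fun n => if n = i then 1 else if n = j then -1 else 0 := ⟨_, rfl⟩
    obtain ⟨e, hedef⟩ : ∃ e : Fin (N + 1) → ℝ,
        e = fun n => if n = i then 1 - a else if n = j then -(1 - a) else 0 := ⟨_, rfl⟩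
    have hwi : w i = 1 := by rw [hwdef]; simp
    have hwj : w j = -1 := by rw [hwdef]; simp [hji]
    have hwo : ∀ n, n ≠ i → n ≠ j → w n = 0 := by
      intro n h1 h2; rw [hwdef]; simp [h1, h2]
    have hei : e i = 1 - a := by rw [hedef]; simp
    have hej : e j = -(1 - a) := by rw [hedef]; simp [hji]
    have heo : ∀ n, n ≠ i → n ≠ j → e n = 0 := by
      intro n h1 h2; rw [hedef]; simp [h1, h2]
    have hKwij : ∀ n, Kt n i - Kt n j = e n := by
      intro n
      by_cases h1 : n = i
      · subst h1
        rw [hKt, hKt, hei, if_pos rfl, if_neg hij,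
          if_neg (show ¬ (n = 0 ∨ j = 0) by tauto)]
      · by_cases h2 : n = j
        · subst h2
          rw [hKt, hKt, hej, if_neg h1, if_pos rfl,
            if_neg (show ¬ (n = 0 ∨ i = 0) by tauto)]
          ring
        · rw [hKt, hKt, heo n h1 h2, if_neg h1, if_neg h2]
          by_cases h0 : n = 0
          · rw [if_pos (Or.inl h0), if_pos (Or.inl h0)]
            ring
          · rw [if_neg (show ¬ (n = 0 ∨ i = 0) by tauto),
              if_neg (show ¬ (n = 0 ∨ j = 0) by tauto)]
            ring
    have hmv2 : ∀ t : ℝ, ∀ n, Kt.mulVec (fun m => lamT m + t * w m) n = u n + t * e n := by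
      intro t n
      have step1 : Kt.mulVec (fun m => lamT m + t * w m) n
          = ∑ m, (Kt n m * lamT m + t * (Kt n m * w m)) := by
        show ∑ m, Kt n m * (lamT m + t * w m) = _
        exact Finset.sum_congr rfl fun m _ => by ring
      rw [step1, Finset.sum_add_distrib, ← Finset.mul_sum, ← humv]
      congr 1
      congr 1
      have step2 : ∀ m, Kt n m * w m
          = (if m = i then Kt n m else 0) - (if m = j then Kt n m else 0) := by
        intro m
        by_cases h1 : m = i
        · rw [h1, hwi]
          simp [hij]
          try ring
        · by_cases h2 : m = j
          · rw [h2, hwj]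
            simp [hji]
            try ring
          · rw [hwo m h1 h2]
            simp [h1, h2]
      rw [Finset.sum_congr rfl fun m _ => step2 m, Finset.sum_sub_distrib]
      simp only [Finset.sum_ite_eq', Finset.mem_univ, if_pos]
      exact hKwij n
    obtain ⟨g, hgdef⟩ : ∃ g : ℝ → ℝ, g = fun t =>
        lamStar i * Real.log (u i + t * (1 - a)) + lamStar j * Real.log (u j + t * (-(1 - a))) := ⟨_, rfl⟩
    have hfeas : ∀ t ∈ Set.Ioo (-(lamT i)) (lamT j), g t ≤ g 0 := by
      intro t ht
      have hnn : ∀ n, 0 ≤ lamT n + t * w n := by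
        intro n
        by_cases h1 : n = i
        · rw [h1, hwi, mul_one]
          have := ht.1; linarith [hposT i]
        · by_cases h2 : n = j
          · rw [h2, hwj]
            have := ht.2; nlinarith
          · rw [hwo n h1 h2, mul_zero, add_zero]
            exact hT_nonneg n
      have hsum : ∑ n, (lamT n + t * w n) ≤ 1 := by
        have hweq : ∀ n, w n = (if n = i then (1:ℝ) else 0) + (if n = j then (-1:ℝ) else 0) := by
          intro n
          by_cases h1 : n = i
          · rw [h1, hwi]; simp [hij]
          · by_cases h2 : n = j
            · rw [h2, hwj]; simp [hji]
            · rw [hwo n h1 h2]; simp [h1, h2]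
        have hw0 : ∑ n, w n = 0 := by
          rw [Finset.sum_congr rfl fun n _ => hweq n, Finset.sum_add_distrib]
          simp [Finset.sum_ite_eq']
        rw [Finset.sum_add_distrib, ← Finset.mul_sum, hw0]
        simpa [← hS] using hSle
      have hineq := hmax (fun m => lamT m + t * w m) hnn hsum
      rw [Finset.sum_congr rfl fun n _ => by rw [hmv2 t n]] at hineq
      obtain ⟨h, hhdef⟩ : ∃ h : Fin (N+1) → ℝ, h = fun n =>
          lamStar n * Real.log (u n + t * e n) - lamStar n * Real.log (u n) := ⟨_, rfl⟩
      have hvanish : ∀ n, n ≠ i → n ≠ j → h n = 0 := by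
        intro n h1 h2
        rw [hhdef]
        simp [heo n h1 h2]
      have hdiff : ∑ n, h n ≤ 0 := by
        rw [hhdef, Finset.sum_sub_distrib]
        linarith
      have hpair : ∑ n, h n = h i + h j := by
        rw [← Finset.sum_pair hij]
        refine (Finset.sum_subset (Finset.subset_univ _) ?_).symm
        intro x _ hx
        simp only [Finset.mem_insert, Finset.mem_singleton, not_or] at hx
        exact hvanish x hx.1 hx.2
      have hkey : h i + h j ≤ 0 := hpair ▸ hdiff
      rw [hhdef] at hkey
      simp only [hei, hej] at hkey
      rw [hgdef]
      simp only [zero_mul, add_zero]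
      linarith
    have hlocmax : IsLocalMax g 0 := by
      have hmem : Set.Ioo (-(lamT i)) (lamT j) ∈ nhds (0:ℝ) :=
        Ioo_mem_nhds (by linarith [hposT i]) (hposT j)
      exact Filter.eventually_of_mem hmem hfeas
    have hui := hu_pos i
    have huj := hu_pos j
    have hne_i : u i + (0:ℝ) * (1 - a) ≠ 0 := by simpa using hui.ne'
    have hne_j : u j + (0:ℝ) * (-(1 - a)) ≠ 0 := by simpa using huj.ne'
    have hd1 : HasDerivAt (fun t : ℝ => u i + t * (1 - a)) (1 - a) 0 :=
      (hasDerivAt_mul_const (1 - a)).const_add (u i)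
    have hd2 : HasDerivAt (fun t : ℝ => u j + t * (-(1 - a))) (-(1 - a)) 0 :=
      (hasDerivAt_mul_const (-(1 - a))).const_add (u j)
    have hl1 : HasDerivAt (fun t : ℝ => Real.log (u i + t * (1 - a))) ((1 - a) / u i) 0 := by
      have := hd1.log hne_i
      simpa using this
    have hl2 : HasDerivAt (fun t : ℝ => Real.log (u j + t * (-(1 - a)))) (-(1 - a) / u j) 0 := by
      have := hd2.log hne_j
      simpa using this
    have hgd : HasDerivAt g
        (lamStar i * ((1 - a) / u i) + lamStar j * (-(1 - a) / u j)) 0 := by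
      rw [hgdef]
      exact (hl1.const_mul _).add (hl2.const_mul _)
    have hzero := hlocmax.hasDerivAt_eq_zero hgd
    have h1 : lamStar i * ((1 - a) / u i) = lamStar j * ((1 - a) / u j) := by
      have heq : lamStar j * (-(1 - a) / u j) = -(lamStar j * ((1 - a) / u j)) := by ring
      rw [heq] at hzero
      linarith
    have h2 : lamStar i * (1 - a) * u j = lamStar j * (1 - a) * u i := by
      have e := congrArg (fun x : ℝ => x * (u i * u j)) h1
      rw [show lamStar i * ((1 - a) / u i) * (u i * u j)
            = lamStar i * (1 - a) * (u i / u i) * u j by ring,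
        show lamStar j * ((1 - a) / u j) * (u i * u j)
            = lamStar j * (1 - a) * (u j / u j) * u i by ring,
        div_self hui.ne', div_self huj.ne'] at e
      linarith [e]
    have h3 : (1 - a) * (lamStar i * u j - lamStar j * u i) = 0 := by linarith [h2]
    rcases mul_eq_zero.mp h3 with h4 | h4
    · exact absurd h4 hδ.ne'
    · linarith
  -- case split
  by_cases hex : ∃ k : Fin (N + 1), k ≠ 0 ∧ 0 < lamStar k
  · obtain ⟨k, hk0, hkpos⟩ := hex
    refine ⟨u k / ((1 - a) * lamStar k), -(((b - a) * lamT 0 + a * S) / (1 - a)), ?_, ?_⟩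
    · exact le_of_lt (div_pos (hu_pos k) (mul_pos hδ hkpos))
    · intro n hn
      have h1 := hratio n k hn hk0
      have h2 := hu_formula n hn
      have hane : (1:ℝ) - a ≠ 0 := hδ.ne'
      have hkne : lamStar k ≠ 0 := hkpos.ne'
      have hq : u k / ((1 - a) * lamStar k) * lamStar n = u n / (1 - a) := by
        rw [div_mul_eq_mul_div, div_eq_div_iff (mul_ne_zero hane hkne) hane]
        linear_combination (1 - a) * h1
      rw [hq, ← neg_div, ← add_div, eq_div_iff hane]
      linear_combination (-1:ℝ) * h2
  · push_neg at hex
    exfalso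
    have hz : ∀ k : Fin (N + 1), k ≠ 0 → lamStar k = 0 := fun k hk =>
      le_antisymm (not_lt.mp fun h => absurd h (by simpa using (hex k hk))) (hlamStar_nonneg k)
    have hl0 : lamStar 0 = 1 := by
      have hsum := hlamStar_sum
      rw [Fin.sum_univ_succ] at hsum
      have htail : ∑ i : Fin N, lamStar i.succ = 0 :=
        Finset.sum_eq_zero fun i _ => hz i.succ (Fin.succ_ne_zero i)
      rw [htail] at hsum
      linarith
    -- test point: all mass at 0
    obtain ⟨e0, he0⟩ : ∃ e0 : Fin (N + 1) → ℝ,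
        e0 = fun n => if n = 0 then (1:ℝ) else 0 := ⟨_, rfl⟩
    have he0nn : ∀ n, 0 ≤ e0 n := by
      intro n; rw [he0]; dsimp only; split_ifs <;> norm_num
    have he0sum : ∑ n, e0 n ≤ 1 := by
      rw [he0]; simp [Finset.sum_ite_eq']
    have hmve0 : ∀ n, Kt.mulVec e0 n = Kt n 0 := by
      intro n
      show ∑ m, Kt n m * e0 m = Kt n 0
      have : ∀ m, Kt n m * e0 m = if m = 0 then Kt n m else 0 := by
        intro m; rw [he0]; dsimp only; split_ifs <;> simp
      rw [Finset.sum_congr rfl fun m _ => this m]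
      simp [Finset.sum_ite_eq']
    have hineq := hmax e0 he0nn he0sum
    have hLHS : ∑ n, lamStar n * Real.log (Kt.mulVec e0 n) = 0 := by
      refine Finset.sum_eq_zero fun n _ => ?_
      by_cases hn : n = 0
      · subst hn
        rw [hmve0, hKt]
        simp
      · rw [hz n hn]; ring
    have hRHS : ∑ n, lamStar n * Real.log (u n) = Real.log (u 0) := by
      rw [Fin.sum_univ_succ]
      have htail : ∑ i : Fin N, lamStar i.succ * Real.log (u i.succ) = 0 :=
        Finset.sum_eq_zero fun i _ => by rw [hz i.succ (Fin.succ_ne_zero i)]; ring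
      rw [htail, hl0]
      ring
    rw [hLHS, hRHS] at hineq
    -- but u 0 < 1
    have hT0lt : lamT 0 < S := by
      have hSeq : S = lamT 0 + ∑ i : Fin N, lamT i.succ := by
        rw [hS, Fin.sum_univ_succ]
      have hpos : 0 < ∑ i : Fin N, lamT i.succ := by
        refine Finset.sum_pos (fun i _ => hposT i.succ) ?_
        exact Finset.univ_nonempty_iff.mpr ⟨⟨0, hN⟩⟩
      linarith
    have hu0lt : u 0 < 1 := by
      rw [hu0_formula]
      have hprod : 0 < (1 - b) * (S - lamT 0) :=
        mul_pos (by linarith) (by linarith)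
      nlinarith [hprod, hSle]
    have := Real.log_neg (hu_pos 0) hu0lt
    linarith
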